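/- Let K = ℤ/2 × ℤ/2 be the Klein four-group, and let S be the set of 5-tuples (g, d, t₄, t₅, t₈) ∈ K⁵ such that not both g and d are the identity and there is no single k ∈ K with {t₄, t₅, t₈} ⊆ {1, k}. The automorphism group Aut(K) (which has order 6) acts on S componentwise, this action is free (the only automorphism fixing a tuple in S is the identity), and the number of orbits of this action is exactly 105. -/

import Mathlib

set_option synthInstance.maxSize 4000
set_option synthInstance.maxHeartbeats 1000000
set_option maxHeartbeats 2000000
set_option maxRecDepth 8000

/-- The Klein four-group. -/
abbrev KleinFour := ZMod 2 × ZMod 2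

/-- 5-tuples of elements of the Klein four-group. -/
abbrev Tuple5 := KleinFour × KleinFour × KleinFour × KleinFour × KleinFour

/-- The condition on a tuple `(g, d, t₄, t₅, t₈)`: not both `g` and `d` are the identity, and
there is no single `k` with `{t₄, t₅, t₈} ⊆ {0, k}`. -/
def goodTuple (v : Tuple5) : Prop :=
  ¬(v.1 = 0 ∧ v.2.1 = 0) ∧
  ¬∃ k : KleinFour, (v.2.2.1 = 0 ∨ v.2.2.1 = k) ∧ (v.2.2.2.1 = 0 ∨ v.2.2.2.1 = k) ∧
    (v.2.2.2.2 = 0 ∨ v.2.2.2.2 = k)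

/-- The componentwise action of an automorphism of the Klein four-group on a 5-tuple. -/
def autAct (σ : AddAut KleinFour) (v : Tuple5) : Tuple5 :=
  (σ v.1, σ v.2.1, σ v.2.2.1, σ v.2.2.2.1, σ v.2.2.2.2)

instance : DecidablePred goodTuple := fun v => by unfold goodTuple; infer_instance

lemma autAct_one (v : Tuple5) : autAct 0 v = v := rfl

lemma autAct_mul (σ τ : AddAut KleinFour) (v : Tuple5) :
    autAct (σ + τ) v = autAct σ (autAct τ v) := rfl

lemma autAct_inv (σ : AddAut KleinFour) (v : Tuple5) : autAct (-σ) (autAct σ v) = v := by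
  rw [← autAct_mul, neg_add_cancel, autAct_one]

lemma sigma_eq_zero_iff (σ : AddAut KleinFour) (x : KleinFour) : σ x = 0 ↔ x = 0 := by
  constructor
  · intro h
    have := σ.injective (a₁ := x) (a₂ := 0) (by simpa using h)
    exact this
  · rintro rfl; simp

lemma goodTuple_autAct (σ : AddAut KleinFour) (v : Tuple5) (hv : goodTuple v) :
    goodTuple (autAct σ v) := by
  obtain ⟨h1, h2⟩ := hv
  constructor
  · intro ⟨ha, hb⟩
    exact h1 ⟨(sigma_eq_zero_iff σ _).1 ha, (sigma_eq_zero_iff σ _).1 hb⟩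
  · rintro ⟨k, hk1, hk2, hk3⟩
    refine h2 ⟨σ.symm k, ?_, ?_, ?_⟩
    · rcases hk1 with h | h
      · exact Or.inl ((sigma_eq_zero_iff σ _).1 h)
      · exact Or.inr (by rw [← h]; exact (σ.symm_apply_apply _).symm)
    · rcases hk2 with h | h
      · exact Or.inl ((sigma_eq_zero_iff σ _).1 h)
      · exact Or.inr (by rw [← h]; exact (σ.symm_apply_apply _).symm)
    · rcases hk3 with h | h
      · exact Or.inl ((sigma_eq_zero_iff σ _).1 h)
      · exact Or.inr (by rw [← h]; exact (σ.symm_apply_apply _).symm)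

/-- The subtype of good tuples. -/
abbrev Good := {v : Tuple5 // goodTuple v}

instance : AddAction (AddAut KleinFour) Good where
  vadd σ v := ⟨autAct σ v.1, goodTuple_autAct σ v.1 v.2⟩
  zero_vadd v := Subtype.ext (autAct_one v.1)
  add_vadd σ τ v := Subtype.ext (autAct_mul σ τ v.1)

lemma smul_good_def (σ : AddAut KleinFour) (v : Good) : (σ +ᵥ v).1 = autAct σ v.1 := rfl

/-- The key freeness fact, checked by enumeration: an automorphism fixing the last three
components of a good tuple is the identity. -/
lemma free_key : ∀ σ : AddAut KleinFour, ∀ t4 t5 t8 : KleinFour,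
    (¬∃ k : KleinFour, (t4 = 0 ∨ t4 = k) ∧ (t5 = 0 ∨ t5 = k) ∧ (t8 = 0 ∨ t8 = k)) →
    σ t4 = t4 → σ t5 = t5 → σ t8 = t8 → σ = 0 := by decide

lemma freeness (σ : AddAut KleinFour) (v : Tuple5) (hv : goodTuple v)
    (h : autAct σ v = v) : σ = 0 := by
  have h4 : σ v.2.2.1 = v.2.2.1 := congrArg (fun w => w.2.2.1) h
  have h5 : σ v.2.2.2.1 = v.2.2.2.1 := congrArg (fun w => w.2.2.2.1) h
  have h8 : σ v.2.2.2.2 = v.2.2.2.2 := congrArg (fun w => w.2.2.2.2) h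
  exact free_key σ _ _ _ hv.2 h4 h5 h8

instance : DecidableEq (AddAut KleinFour) := fun a b => Fintype.decidableEqAddEquivFintype a b

instance (v w : Tuple5) : Decidable (∃ σ : AddAut KleinFour, autAct σ v = w) :=
  Fintype.decidableExistsFintype

instance goodOrbitRelDecidable : DecidableRel (AddAction.orbitRel (AddAut KleinFour) Good).r :=
  fun v w => decidable_of_iff (∃ σ : AddAut KleinFour, autAct σ w.1 = v.1) (by
    rw [AddAction.orbitRel_apply, AddAction.mem_orbit_iff]
    constructor
    · rintro ⟨σ, h⟩; exact ⟨σ, Subtype.ext h⟩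
    · rintro ⟨σ, h⟩; exact ⟨σ, congrArg Subtype.val h⟩)

instance : Fintype (Quotient (AddAction.orbitRel (AddAut KleinFour) Good)) :=
  @Quotient.fintype _ _ (AddAction.orbitRel (AddAut KleinFour) Good) goodOrbitRelDecidable

noncomputable instance (σ : AddAut KleinFour) : Fintype (AddAction.fixedBy Good σ) :=
  Set.Finite.fintype (Set.toFinite _)

lemma card_good : Fintype.card Good = 630 := by decide

lemma card_orbits :
    Fintype.card (Quotient (AddAction.orbitRel (AddAut KleinFour) Good)) = 105 := by
  have hb := AddAction.sum_card_fixedBy_eq_card_orbits_mul_card_addGroup (AddAut KleinFour) Good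
  have hcard6 : Fintype.card (AddAut KleinFour) = 6 := by decide
  have hsum : (∑ σ : AddAut KleinFour, Fintype.card (AddAction.fixedBy Good σ)) = 630 := by
    rw [Finset.sum_eq_single 0]
    · rw [← card_good]
      apply Fintype.card_congr
      exact Equiv.subtypeUnivEquiv (fun v => zero_vadd _ v)
    · intro σ _ hσ
      rw [Fintype.card_eq_zero_iff]
      refine ⟨fun ⟨v, hfix⟩ => ?_⟩
      have : (σ +ᵥ v : Good) = v := hfix
      exact hσ (freeness σ v.1 v.2 (congrArg Subtype.val this))
    · intro h; exact absurd (Finset.mem_univ 0) h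
  rw [hsum, hcard6] at hb
  omega

lemma orbit_eq_iff (v w : Good) :
    ({x | ∃ σ : AddAut KleinFour, autAct σ v.1 = x} =
      {x | ∃ σ : AddAut KleinFour, autAct σ w.1 = x}) ↔
      ∃ σ : AddAut KleinFour, autAct σ w.1 = v.1 := by
  constructor
  · intro h
    have : v.1 ∈ {x | ∃ σ : AddAut KleinFour, autAct σ v.1 = x} := ⟨0, autAct_one v.1⟩
    rw [h] at this
    exact this
  · rintro ⟨σ, h⟩
    ext x
    constructor
    · rintro ⟨τ, rfl⟩
      exact ⟨τ + σ, by rw [autAct_mul, h]⟩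
    · rintro ⟨τ, rfl⟩
      exact ⟨τ + -σ, by rw [autAct_mul, ← h, autAct_inv]⟩

/-- The map from orbit classes to orbit sets. -/
def orbitMap : Quotient (AddAction.orbitRel (AddAut KleinFour) Good) →
    {s : Set Tuple5 //
      ∃ v : Tuple5, goodTuple v ∧ s = {w | ∃ σ : AddAut KleinFour, autAct σ v = w}} :=
  Quotient.lift
    (fun v : Good => ⟨{w | ∃ σ : AddAut KleinFour, autAct σ v.1 = w}, v.1, v.2, rfl⟩)
    (fun v w h => by
      apply Subtype.ext
      obtain ⟨σ, hσ⟩ := AddAction.mem_orbit_iff.mp h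
      exact (orbit_eq_iff v w).2 ⟨σ, congrArg Subtype.val hσ⟩)

lemma orbitMap_bijective : Function.Bijective orbitMap := by
  constructor
  · rintro ⟨v⟩ ⟨w⟩ h
    apply Quotient.sound
    have h' := congrArg Subtype.val h
    obtain ⟨σ, hσ⟩ := (orbit_eq_iff v w).1 h'
    exact AddAction.mem_orbit_iff.mpr ⟨σ, Subtype.ext hσ⟩
  · rintro ⟨s, v, hv, rfl⟩
    exact ⟨Quotient.mk _ ⟨v, hv⟩, rfl⟩

theorem stmt14 :
    Nat.card (AddAut KleinFour) = 6 ∧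
    (∀ σ : AddAut KleinFour, ∀ v : Tuple5, goodTuple v → autAct σ v = v → σ = 0) ∧
    Nat.card {s : Set Tuple5 //
      ∃ v : Tuple5, goodTuple v ∧ s = {w | ∃ σ : AddAut KleinFour, autAct σ v = w}} = 105 := by
  refine ⟨by rw [Nat.card_eq_fintype_card]; decide, freeness, ?_⟩
  rw [← Nat.card_eq_of_bijective orbitMap orbitMap_bijective, Nat.card_eq_fintype_card,
    card_orbits]
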